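/- Let G be a short dicotic game. Then G ≽ 0 (mod D⁻) if and only if o(G) ≥ N (i.e., Left moving first wins G under misère play) and for every right option G^R of G there is a left option G^{RL} of G^R with G^{RL} ≽ 0 (mod D⁻). -/

import Mathlib

universe u

namespace SetTheory

inductive PGame : Type (u + 1)
  | mk : ∀ α β : Type u, (α → PGame) → (β → PGame) → PGame

namespace PGame

def LeftMoves : PGame → Type u
  | mk l _ _ _ => l

def RightMoves : PGame → Type u
  | mk _ r _ _ => r

def moveLeft : ∀ g : PGame, LeftMoves g → PGame
  | mk _l _ L _ => L

def moveRight : ∀ g : PGame, RightMoves g → PGame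
  | mk _ _r _ R => R

inductive IsOption : PGame → PGame → Prop
  | moveLeft {x : PGame} (i : x.LeftMoves) : IsOption (x.moveLeft i) x
  | moveRight {x : PGame} (i : x.RightMoves) : IsOption (x.moveRight i) x

noncomputable def birthday : PGame.{u} → Ordinal.{u}
  | ⟨_, _, xL, xR⟩ =>
    max (Ordinal.lsub.{u, u} fun i => birthday (xL i)) (Ordinal.lsub.{u, u} fun i => birthday (xR i))

theorem birthday_moveLeft_lt {x : PGame} (i : x.LeftMoves) :
    (x.moveLeft i).birthday < x.birthday := by
  cases x; rw [birthday]; exact lt_max_of_lt_left (Ordinal.lt_lsub _ i)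

theorem birthday_moveRight_lt {x : PGame} (i : x.RightMoves) :
    (x.moveRight i).birthday < x.birthday := by
  cases x; rw [birthday]; exact lt_max_of_lt_right (Ordinal.lt_lsub _ i)

def Identical : PGame.{u} → PGame.{u} → Prop
  | mk _ _ xL xR, mk _ _ yL yR =>
    Relator.BiTotal (fun i j => Identical (xL i) (yL j)) ∧
      Relator.BiTotal (fun i j => Identical (xR i) (yR j))

instance : Zero PGame :=
  ⟨⟨PEmpty, PEmpty, PEmpty.elim, PEmpty.elim⟩⟩

def star : PGame.{u} :=
  ⟨PUnit, PUnit, fun _ => 0, fun _ => 0⟩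

def neg : PGame → PGame
  | ⟨l, r, L, R⟩ => ⟨r, l, fun i => neg (R i), fun i => neg (L i)⟩

instance : Neg PGame :=
  ⟨neg⟩

noncomputable instance : Add PGame.{u} :=
  ⟨fun x y => by
    induction x generalizing y with | mk xl xr _ _ IHxl IHxr => ?_
    induction y with | mk yl yr yL yR IHyl IHyr => ?_
    have y := mk yl yr yL yR
    refine ⟨xl ⊕ yl, xr ⊕ yr, Sum.rec ?_ ?_, Sum.rec ?_ ?_⟩
    · exact fun i => IHxl i y
    · exact IHyl
    · exact fun i => IHxr i y
    · exact IHyr⟩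

end PGame

end SetTheory

open SetTheory PGame

namespace MisereDicot

def Follower (G' G : PGame) : Prop := Relation.ReflTransGen PGame.IsOption G' G

def IsShort (G : PGame) : Prop :=
  ∀ G', Follower G' G → Finite G'.LeftMoves ∧ Finite G'.RightMoves

def Dicot (G : PGame) : Prop :=
  ∀ G', Follower G' G → (IsEmpty G'.LeftMoves ↔ IsEmpty G'.RightMoves)

mutual
def LeftWinsFirst (G : PGame) : Prop :=
  IsEmpty G.LeftMoves ∨ ∃ i, ¬ RightWinsFirst (G.moveLeft i)
termination_by G.birthday
decreasing_by exact PGame.birthday_moveLeft_lt i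

def RightWinsFirst (G : PGame) : Prop :=
  IsEmpty G.RightMoves ∨ ∃ j, ¬ LeftWinsFirst (G.moveRight j)
termination_by G.birthday
decreasing_by exact PGame.birthday_moveRight_lt j
end

inductive MOutcome : Type
  | L | N | P | R
deriving DecidableEq

instance : LE MOutcome := ⟨fun a b => a = b ∨ a = .R ∨ b = .L⟩

noncomputable def outcome (G : PGame) : MOutcome := by
  classical
  exact if LeftWinsFirst G then (if RightWinsFirst G then .N else .L)
        else (if RightWinsFirst G then .R else .P)

def Dge (G H : PGame) : Prop :=
  ∀ X : PGame, IsShort X → Dicot X → outcome (H + X) ≤ outcome (G + X)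

def Deq (G H : PGame) : Prop :=
  ∀ X : PGame, IsShort X → Dicot X → outcome (G + X) = outcome (H + X)

def Dgt (G H : PGame) : Prop := Dge G H ∧ ¬ Deq G H

def DInvertible (G : PGame) : Prop :=
  ∃ H : PGame, IsShort H ∧ Dicot H ∧ Deq (G + H) 0

/-- The left option `G^L_i` is reversible through its right option `(G^L_i)^R_j ≼ G`. -/
def LeftReversibleAt (G : PGame) (i : G.LeftMoves) (j : (G.moveLeft i).RightMoves) : Prop :=
  Dge G ((G.moveLeft i).moveRight j)

def RightReversibleAt (G : PGame) (j : G.RightMoves) (i : (G.moveRight j).LeftMoves) : Prop :=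
  Dge ((G.moveRight j).moveLeft i) G

/-- `G` has a dominated left option (removable by the Domination theorem). -/
def LeftDominated (G : PGame) : Prop :=
  ∃ i i' : G.LeftMoves, ¬ (G.moveLeft i).Identical (G.moveLeft i') ∧
    Dge (G.moveLeft i') (G.moveLeft i)

def RightDominated (G : PGame) : Prop :=
  ∃ j j' : G.RightMoves, ¬ (G.moveRight j).Identical (G.moveRight j') ∧
    Dge (G.moveRight j) (G.moveRight j')

/-- `G` has a non-atomic reversible left option (bypassable). -/
def LeftNonAtomicReversible (G : PGame) : Prop :=
  ∃ i j, LeftReversibleAt G i j ∧ Nonempty ((G.moveLeft i).moveRight j).LeftMoves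

def RightNonAtomicReversible (G : PGame) : Prop :=
  ∃ j i, RightReversibleAt G j i ∧ Nonempty ((G.moveRight j).moveLeft i).RightMoves

/-- `G` has an atomic-reversible left option to which the atomic-reversibility
replacement applies nontrivially (i.e. changing the set of options): either some
other left option is a winning first move for Left (so the option is removable),
or the option is not already `*`. -/
def LeftAtomicReducible (G : PGame) : Prop :=
  ∃ i j, LeftReversibleAt G i j ∧ IsEmpty ((G.moveLeft i).moveRight j).LeftMoves ∧
    ((∃ i', ¬ (G.moveLeft i').Identical (G.moveLeft i) ∧ ¬ RightWinsFirst (G.moveLeft i')) ∨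
      ¬ (G.moveLeft i).Identical star)

def RightAtomicReducible (G : PGame) : Prop :=
  ∃ j i, RightReversibleAt G j i ∧ IsEmpty ((G.moveRight j).moveLeft i).RightMoves ∧
    ((∃ j', ¬ (G.moveRight j').Identical (G.moveRight j) ∧ ¬ LeftWinsFirst (G.moveRight j')) ∨
      ¬ (G.moveRight j).Identical star)

/-- The Substitution theorem applies to `G`: `G = {A | C}` with `A` an
atomic-reversible left option and `C` an atomic-reversible right option. -/
def SubstitutionReducible (G : PGame) : Prop :=
  (∀ i i' : G.LeftMoves, (G.moveLeft i).Identical (G.moveLeft i')) ∧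
  (∀ j j' : G.RightMoves, (G.moveRight j).Identical (G.moveRight j')) ∧
  (∃ i j, LeftReversibleAt G i j ∧ IsEmpty ((G.moveLeft i).moveRight j).LeftMoves) ∧
  (∃ j i, RightReversibleAt G j i ∧ IsEmpty ((G.moveRight j).moveLeft i).RightMoves)

/-- `G` is in canonical form: no follower admits any of the misère-dicot
simplifications (domination, non-atomic reversibility, atomic reversibility,
substitution) producing an equivalent game with a different set of options. -/
def CanonicalForm (G : PGame) : Prop :=
  ∀ G', Follower G' G →
    ¬ (LeftDominated G' ∨ RightDominated G' ∨
       LeftNonAtomicReversible G' ∨ RightNonAtomicReversible G' ∨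
       LeftAtomicReducible G' ∨ RightAtomicReducible G' ∨
       SubstitutionReducible G')

/-- The game `*2 = {0, * | 0, *}`. -/
def star2 : PGame :=
  PGame.mk Bool Bool (fun b => cond b star 0) (fun b => cond b star 0)

open Classical in
/-- The adjoint `G°` of `G`. -/
noncomputable def adjoint : PGame → PGame
  | PGame.mk l r L R =>
    if IsEmpty l ∧ IsEmpty r then star
    else if IsEmpty l then PGame.mk r PUnit (fun j => adjoint (R j)) (fun _ => 0)
    else if IsEmpty r then PGame.mk PUnit l (fun _ => 0) (fun i => adjoint (L i))
    else PGame.mk r l (fun j => adjoint (R j)) (fun i => adjoint (L i))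

/-- A universe of short games: a class closed under taking options, disjunctive
sums and conjugates. -/
structure GameUniverse where
  mem : PGame → Prop
  short_mem : ∀ G, mem G → IsShort G
  isOption_mem : ∀ G G', mem G → PGame.IsOption G' G → mem G'
  add_mem : ∀ G H, mem G → mem H → mem (G + H)
  neg_mem : ∀ G, mem G → mem (-G)

/-- `G ≽ H` modulo the universe `U`. -/
def UGe (U : GameUniverse) (G H : PGame) : Prop :=
  ∀ X : PGame, U.mem X → outcome (H + X) ≤ outcome (G + X)

/-- `G = H` modulo the universe `U`. -/
def UEq (U : GameUniverse) (G H : PGame) : Prop :=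
  ∀ X : PGame, U.mem X → outcome (G + X) = outcome (H + X)

/-- `G ≻ H` modulo the universe `U`. -/
def UGt (U : GameUniverse) (G H : PGame) : Prop := UGe U G H ∧ ¬ UEq U G H

/-- `J` is invertible in the universe `U`. -/
def UInvertible (U : GameUniverse) (J : PGame) : Prop :=
  ∃ J' : PGame, U.mem J' ∧ UEq U (J + J') 0

end MisereDicot

namespace SetTheory

namespace PGame

@[elab_as_elim]
noncomputable def moveRecOn {C : PGame.{u} → Sort*} (x : PGame.{u})
    (IH : ∀ y : PGame.{u}, (∀ i, C (y.moveLeft i)) → (∀ j, C (y.moveRight j)) → C y) : C x :=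
  x.recOn fun yl yr yL yR => IH (mk yl yr yL yR)

instance isEmpty_zero_leftMoves : IsEmpty (LeftMoves 0) :=
  inferInstanceAs (IsEmpty PEmpty)

instance isEmpty_zero_rightMoves : IsEmpty (RightMoves 0) :=
  inferInstanceAs (IsEmpty PEmpty)

instance uniqueStarLeftMoves : Unique star.LeftMoves := PUnit.instUnique

instance uniqueStarRightMoves : Unique star.RightMoves := PUnit.instUnique

theorem leftMoves_add : ∀ x y : PGame.{u}, (x + y).LeftMoves = (x.LeftMoves ⊕ y.LeftMoves)
  | ⟨_, _, _, _⟩, ⟨_, _, _, _⟩ => rfl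

theorem rightMoves_add : ∀ x y : PGame.{u}, (x + y).RightMoves = (x.RightMoves ⊕ y.RightMoves)
  | ⟨_, _, _, _⟩, ⟨_, _, _, _⟩ => rfl

def toLeftMovesAdd {x y : PGame.{u}} : x.LeftMoves ⊕ y.LeftMoves ≃ (x + y).LeftMoves :=
  Equiv.cast (leftMoves_add x y).symm

def toRightMovesAdd {x y : PGame.{u}} : x.RightMoves ⊕ y.RightMoves ≃ (x + y).RightMoves :=
  Equiv.cast (rightMoves_add x y).symm

theorem add_moveLeft_inl (x : PGame.{u}) {y : PGame.{u}} (i : x.LeftMoves) :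
    (x + y).moveLeft (toLeftMovesAdd (Sum.inl i)) = x.moveLeft i + y := by
  cases x; cases y; rfl

theorem add_moveLeft_inr (x : PGame.{u}) {y : PGame.{u}} (i : y.LeftMoves) :
    (x + y).moveLeft (toLeftMovesAdd (Sum.inr i)) = x + y.moveLeft i := by
  cases x; cases y; rfl

theorem add_moveRight_inl (x : PGame.{u}) {y : PGame.{u}} (i : x.RightMoves) :
    (x + y).moveRight (toRightMovesAdd (Sum.inl i)) = x.moveRight i + y := by
  cases x; cases y; rfl

theorem add_moveRight_inr (x : PGame.{u}) {y : PGame.{u}} (i : y.RightMoves) :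
    (x + y).moveRight (toRightMovesAdd (Sum.inr i)) = x + y.moveRight i := by
  cases x; cases y; rfl

theorem wf_isOption : WellFounded IsOption.{u} :=
  ⟨fun x =>
    moveRecOn x fun x IHl IHr =>
      Acc.intro x fun y h => by
        induction h with
        | moveLeft i => exact IHl i
        | moveRight j => exact IHr j⟩

def Subsequent : PGame.{u} → PGame.{u} → Prop :=
  Relation.TransGen IsOption

theorem Subsequent.trans {x y z : PGame.{u}} :
    Subsequent x y → Subsequent y z → Subsequent x z :=
  Relation.TransGen.trans

theorem wf_subsequent : WellFounded Subsequent.{u} :=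
  wf_isOption.transGen

theorem Subsequent.moveLeft {x : PGame.{u}} (i : x.LeftMoves) : Subsequent (x.moveLeft i) x :=
  Relation.TransGen.single (IsOption.moveLeft i)

theorem Subsequent.moveRight {x : PGame.{u}} (j : x.RightMoves) : Subsequent (x.moveRight j) x :=
  Relation.TransGen.single (IsOption.moveRight j)

end PGame

end SetTheory

namespace MisereDicot

theorem lwf_iff (G : PGame) : LeftWinsFirst G ↔
    (IsEmpty G.LeftMoves ∨ ∃ i, ¬ RightWinsFirst (G.moveLeft i)) := by
  rw [LeftWinsFirst]

theorem rwf_iff (G : PGame) : RightWinsFirst G ↔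
    (IsEmpty G.RightMoves ∨ ∃ j, ¬ LeftWinsFirst (G.moveRight j)) := by
  rw [RightWinsFirst]

theorem not_lwf_iff (G : PGame) : ¬ LeftWinsFirst G ↔
    (Nonempty G.LeftMoves ∧ ∀ i, RightWinsFirst (G.moveLeft i)) := by
  rw [lwf_iff]; push_neg; exact Iff.rfl

theorem not_rwf_iff (G : PGame) : ¬ RightWinsFirst G ↔
    (Nonempty G.RightMoves ∧ ∀ j, LeftWinsFirst (G.moveRight j)) := by
  rw [rwf_iff]; push_neg; exact Iff.rfl

theorem mout_le_def (a b : MOutcome) : a ≤ b ↔ (a = b ∨ a = .R ∨ b = .L) := Iff.rfl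

theorem outcome_le_iff (G H : PGame) : outcome G ≤ outcome H ↔
    ((LeftWinsFirst G → LeftWinsFirst H) ∧ (RightWinsFirst H → RightWinsFirst G)) := by
  classical
  unfold outcome
  by_cases h1 : LeftWinsFirst G <;> by_cases h2 : RightWinsFirst G <;>
    by_cases h3 : LeftWinsFirst H <;> by_cases h4 : RightWinsFirst H <;>
    simp [h1, h2, h3, h4, mout_le_def]

theorem N_le_outcome_iff (G : PGame) : MOutcome.N ≤ outcome G ↔ LeftWinsFirst G := by
  classical
  unfold outcome
  by_cases h1 : LeftWinsFirst G <;> by_cases h2 : RightWinsFirst G <;>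
    simp [h1, h2, mout_le_def]

theorem follower_refl (G : PGame) : Follower G G := Relation.ReflTransGen.refl

theorem follower_of_isOption {G' G : PGame} (h : PGame.IsOption G' G) : Follower G' G :=
  Relation.ReflTransGen.single h

theorem Follower.trans {A B C : PGame} (h1 : Follower A B) (h2 : Follower B C) :
    Follower A C := Relation.ReflTransGen.trans h1 h2

theorem IsShort.moveLeft {G : PGame} (h : IsShort G) (i : G.LeftMoves) :
    IsShort (G.moveLeft i) := fun G' hG' =>
  h G' (hG'.trans (follower_of_isOption (PGame.IsOption.moveLeft i)))

theorem IsShort.moveRight {G : PGame} (h : IsShort G) (j : G.RightMoves) :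
    IsShort (G.moveRight j) := fun G' hG' =>
  h G' (hG'.trans (follower_of_isOption (PGame.IsOption.moveRight j)))

theorem Dicot.moveLeft {G : PGame} (h : Dicot G) (i : G.LeftMoves) :
    Dicot (G.moveLeft i) := fun G' hG' =>
  h G' (hG'.trans (follower_of_isOption (PGame.IsOption.moveLeft i)))

theorem Dicot.moveRight {G : PGame} (h : Dicot G) (j : G.RightMoves) :
    Dicot (G.moveRight j) := fun G' hG' =>
  h G' (hG'.trans (follower_of_isOption (PGame.IsOption.moveRight j)))

theorem Dicot.empty_iff {G : PGame} (h : Dicot G) :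
    (IsEmpty G.LeftMoves ↔ IsEmpty G.RightMoves) := h G (follower_refl G)

theorem follower_cases {G' G : PGame} (h : Follower G' G) :
    G' = G ∨ ∃ c, PGame.IsOption c G ∧ Follower G' c := by
  rcases Relation.ReflTransGen.cases_tail h with h | ⟨c, hc, hopt⟩
  · exact Or.inl h.symm
  · exact Or.inr ⟨c, hopt, hc⟩

theorem dicot_mk {G : PGame} (h0 : IsEmpty G.LeftMoves ↔ IsEmpty G.RightMoves)
    (hl : ∀ i, Dicot (G.moveLeft i)) (hr : ∀ j, Dicot (G.moveRight j)) : Dicot G := by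
  intro G' hG'
  rcases follower_cases hG' with rfl | ⟨c, hc, hfc⟩
  · exact h0
  · cases hc with
    | moveLeft i => exact hl i G' hfc
    | moveRight j => exact hr j G' hfc

theorem short_mk {G : PGame} (h1 : Finite G.LeftMoves) (h2 : Finite G.RightMoves)
    (hl : ∀ i, IsShort (G.moveLeft i)) (hr : ∀ j, IsShort (G.moveRight j)) : IsShort G := by
  intro G' hG'
  rcases follower_cases hG' with rfl | ⟨c, hc, hfc⟩
  · exact ⟨h1, h2⟩
  · cases hc with
    | moveLeft i => exact hl i G' hfc
    | moveRight j => exact hr j G' hfc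

theorem dicot_zero : Dicot 0 := by
  apply dicot_mk
  · constructor <;> intro <;> infer_instance
  · rintro ⟨⟩
  · rintro ⟨⟩

theorem short_zero : IsShort 0 := by
  refine short_mk ?_ ?_ ?_ ?_ <;> first | infer_instance | rintro ⟨⟩

theorem dicot_star : Dicot star := by
  apply dicot_mk
  · exact Iff.rfl
  · intro i; exact dicot_zero
  · intro j; exact dicot_zero

theorem short_star : IsShort star := by
  apply short_mk
  · infer_instance
  · infer_instance
  · intro i; exact short_zero
  · intro j; exact short_zero

theorem outcome_congr {A B : PGame} (h1 : LeftWinsFirst A ↔ LeftWinsFirst B)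
    (h2 : RightWinsFirst A ↔ RightWinsFirst B) : outcome A = outcome B := by
  classical
  unfold outcome
  rw [show LeftWinsFirst A = LeftWinsFirst B from propext h1,
    show RightWinsFirst A = RightWinsFirst B from propext h2]

theorem winsFirst_add_empty (X : PGame) (hl : IsEmpty X.LeftMoves)
    (hr : IsEmpty X.RightMoves) :
    ∀ G : PGame, (LeftWinsFirst (G + X) ↔ LeftWinsFirst G) ∧
      (RightWinsFirst (G + X) ↔ RightWinsFirst G) := by
  intro G
  induction G using PGame.moveRecOn with
  | IH G ihl ihr =>
  constructor
  · rw [lwf_iff, lwf_iff]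
    constructor
    · rintro (he | ⟨k, hk⟩)
      · exact Or.inl ⟨fun i => he.elim (toLeftMovesAdd (Sum.inl i))⟩
      · obtain ⟨s, rfl⟩ : ∃ s, toLeftMovesAdd s = k := ⟨_, toLeftMovesAdd.apply_symm_apply k⟩
        cases s with
        | inl i =>
          rw [PGame.add_moveLeft_inl] at hk
          exact Or.inr ⟨i, fun h => hk ((ihl i).2.mpr h)⟩
        | inr i => exact hl.elim i
    · rintro (he | ⟨i, hi⟩)
      · refine Or.inl ⟨fun k => ?_⟩
        obtain ⟨s, rfl⟩ : ∃ s, toLeftMovesAdd s = k := ⟨_, toLeftMovesAdd.apply_symm_apply k⟩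
        cases s with
        | inl i => exact he.elim i
        | inr i => exact hl.elim i
      · refine Or.inr ⟨toLeftMovesAdd (Sum.inl i), ?_⟩
        rw [PGame.add_moveLeft_inl]
        exact fun h => hi ((ihl i).2.mp h)
  · rw [rwf_iff, rwf_iff]
    constructor
    · rintro (he | ⟨k, hk⟩)
      · exact Or.inl ⟨fun j => he.elim (toRightMovesAdd (Sum.inl j))⟩
      · obtain ⟨s, rfl⟩ : ∃ s, toRightMovesAdd s = k := ⟨_, toRightMovesAdd.apply_symm_apply k⟩
        cases s with
        | inl j =>
          rw [PGame.add_moveRight_inl] at hk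
          exact Or.inr ⟨j, fun h => hk ((ihr j).1.mpr h)⟩
        | inr j => exact hr.elim j
    · rintro (he | ⟨j, hj⟩)
      · refine Or.inl ⟨fun k => ?_⟩
        obtain ⟨s, rfl⟩ : ∃ s, toRightMovesAdd s = k := ⟨_, toRightMovesAdd.apply_symm_apply k⟩
        cases s with
        | inl j => exact he.elim j
        | inr j => exact hr.elim j
      · refine Or.inr ⟨toRightMovesAdd (Sum.inl j), ?_⟩
        rw [PGame.add_moveRight_inl]
        exact fun h => hj ((ihr j).1.mp h)

theorem winsFirst_empty_add (X : PGame) (hl : IsEmpty X.LeftMoves)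
    (hr : IsEmpty X.RightMoves) :
    ∀ G : PGame, (LeftWinsFirst (X + G) ↔ LeftWinsFirst G) ∧
      (RightWinsFirst (X + G) ↔ RightWinsFirst G) := by
  intro G
  induction G using PGame.moveRecOn with
  | IH G ihl ihr =>
  constructor
  · rw [lwf_iff, lwf_iff]
    constructor
    · rintro (he | ⟨k, hk⟩)
      · exact Or.inl ⟨fun i => he.elim (toLeftMovesAdd (Sum.inr i))⟩
      · obtain ⟨s, rfl⟩ : ∃ s, toLeftMovesAdd s = k := ⟨_, toLeftMovesAdd.apply_symm_apply k⟩
        cases s with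
        | inl i => exact hl.elim i
        | inr i =>
          rw [PGame.add_moveLeft_inr] at hk
          exact Or.inr ⟨i, fun h => hk ((ihl i).2.mpr h)⟩
    · rintro (he | ⟨i, hi⟩)
      · refine Or.inl ⟨fun k => ?_⟩
        obtain ⟨s, rfl⟩ : ∃ s, toLeftMovesAdd s = k := ⟨_, toLeftMovesAdd.apply_symm_apply k⟩
        cases s with
        | inl i => exact hl.elim i
        | inr i => exact he.elim i
      · refine Or.inr ⟨toLeftMovesAdd (Sum.inr i), ?_⟩
        rw [PGame.add_moveLeft_inr]
        exact fun h => hi ((ihl i).2.mp h)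
  · rw [rwf_iff, rwf_iff]
    constructor
    · rintro (he | ⟨k, hk⟩)
      · exact Or.inl ⟨fun j => he.elim (toRightMovesAdd (Sum.inr j))⟩
      · obtain ⟨s, rfl⟩ : ∃ s, toRightMovesAdd s = k := ⟨_, toRightMovesAdd.apply_symm_apply k⟩
        cases s with
        | inl j => exact hr.elim j
        | inr j =>
          rw [PGame.add_moveRight_inr] at hk
          exact Or.inr ⟨j, fun h => hk ((ihr j).1.mpr h)⟩
    · rintro (he | ⟨j, hj⟩)
      · refine Or.inl ⟨fun k => ?_⟩
        obtain ⟨s, rfl⟩ : ∃ s, toRightMovesAdd s = k := ⟨_, toRightMovesAdd.apply_symm_apply k⟩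
        cases s with
        | inl j => exact hr.elim j
        | inr j => exact he.elim j
      · refine Or.inr ⟨toRightMovesAdd (Sum.inr j), ?_⟩
        rw [PGame.add_moveRight_inr]
        exact fun h => hj ((ihr j).1.mp h)

theorem outcome_add_zero (G : PGame) : outcome (G + 0) = outcome G :=
  outcome_congr ((winsFirst_add_empty 0 inferInstance inferInstance G).1)
    ((winsFirst_add_empty 0 inferInstance inferInstance G).2)

theorem outcome_zero_add (G : PGame) : outcome (0 + G) = outcome G :=
  outcome_congr ((winsFirst_empty_add 0 inferInstance inferInstance G).1)
    ((winsFirst_empty_add 0 inferInstance inferInstance G).2)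

theorem dge_zero_iff (G : PGame) : Dge G 0 ↔
    ∀ X : PGame, IsShort X → Dicot X →
      ((LeftWinsFirst X → LeftWinsFirst (G + X)) ∧
       (RightWinsFirst (G + X) → RightWinsFirst X)) := by
  unfold Dge
  refine forall_congr' fun X => forall_congr' fun hs => forall_congr' fun hd => ?_
  rw [outcome_zero_add X, outcome_le_iff]

theorem lwf_zero : LeftWinsFirst 0 := by
  rw [lwf_iff]; exact Or.inl inferInstance

theorem rwf_zero : RightWinsFirst 0 := by
  rw [rwf_iff]; exact Or.inl inferInstance

theorem lwf_star : ¬ LeftWinsFirst star := by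
  rw [not_lwf_iff]
  exact ⟨⟨PUnit.unit⟩, fun _ => rwf_zero⟩

theorem rwf_star : ¬ RightWinsFirst star := by
  rw [not_rwf_iff]
  exact ⟨⟨PUnit.unit⟩, fun _ => lwf_zero⟩


def XGood (G : PGame.{u}) : Prop :=
  LeftWinsFirst.{u} G ∧ ∀ j, ∃ i, XGood ((G.moveRight j).moveLeft i)
termination_by G.birthday
decreasing_by exact (PGame.birthday_moveLeft_lt i).trans (PGame.birthday_moveRight_lt j)

theorem xgood_iff (G : PGame.{u}) : XGood G ↔
    (LeftWinsFirst.{u} G ∧ ∀ j, ∃ i, XGood ((G.moveRight j).moveLeft i)) := by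
  rw [XGood]

theorem suff_core (G : PGame) (hgl : LeftWinsFirst G)
    (hgr : ∀ j, ∃ i, Dge ((G.moveRight j).moveLeft i) 0) :
    ∀ X : PGame, IsShort X → Dicot X →
      (LeftWinsFirst X → LeftWinsFirst (G + X)) ∧
      (RightWinsFirst (G + X) → RightWinsFirst X) := by
  intro X
  induction X using PGame.moveRecOn with
  | IH X ihl ihr =>
  intro hs hd
  constructor
  · intro hX
    rw [lwf_iff] at hX
    rcases hX with he | ⟨i, hi⟩
    · have her : IsEmpty X.RightMoves := hd.empty_iff.mp he
      exact (winsFirst_add_empty X he her G).1.mpr hgl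
    · rw [lwf_iff]
      refine Or.inr ⟨toLeftMovesAdd (Sum.inr i), ?_⟩
      rw [PGame.add_moveLeft_inr]
      exact fun h => hi ((ihl i (hs.moveLeft i) (hd.moveLeft i)).2 h)
  · intro hGX
    by_contra hX
    have hXne : Nonempty X.RightMoves := ((not_rwf_iff X).mp hX).1
    have hXall : ∀ j, LeftWinsFirst (X.moveRight j) := ((not_rwf_iff X).mp hX).2
    rw [rwf_iff] at hGX
    rcases hGX with he | ⟨k, hk⟩
    · exact he.elim (toRightMovesAdd (Sum.inr hXne.some))
    · obtain ⟨s, rfl⟩ : ∃ s, toRightMovesAdd s = k := ⟨_, toRightMovesAdd.apply_symm_apply k⟩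
      cases s with
      | inl j =>
        rw [PGame.add_moveRight_inl] at hk
        obtain ⟨i, hdge⟩ := hgr j
        apply hk
        rw [lwf_iff]
        refine Or.inr ⟨toLeftMovesAdd (Sum.inl i), ?_⟩
        rw [PGame.add_moveLeft_inl]
        exact fun h => hX (((dge_zero_iff _).mp hdge X hs hd).2 h)
      | inr j =>
        rw [PGame.add_moveRight_inr] at hk
        exact hk ((ihr j (hs.moveRight j) (hd.moveRight j)).1 (hXall j))

theorem adjoint_of_empty {G : PGame} (h1 : IsEmpty G.LeftMoves) (h2 : IsEmpty G.RightMoves) :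
    adjoint G = star := by
  cases G with
  | mk l r L R =>
    rw [adjoint]
    rw [if_pos (show IsEmpty l ∧ IsEmpty r from ⟨h1, h2⟩)]

theorem adjoint_of_nonempty {G : PGame} (h1 : ¬ IsEmpty G.LeftMoves)
    (h2 : ¬ IsEmpty G.RightMoves) :
    adjoint G = PGame.mk G.RightMoves G.LeftMoves
      (fun j => adjoint (G.moveRight j)) (fun i => adjoint (G.moveLeft i)) := by
  cases G with
  | mk l r L R =>
    rw [adjoint]
    have : ¬ (IsEmpty l ∧ IsEmpty r) := fun h => h1 h.1
    rw [if_neg this, if_neg (show ¬ IsEmpty l from h1), if_neg (show ¬ IsEmpty r from h2)]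
    rfl

theorem dicot_adjoint : ∀ E : PGame, Dicot E → Dicot (adjoint E) := by
  intro E
  induction E using PGame.moveRecOn with
  | IH E ihl ihr =>
  intro hd
  by_cases h1 : IsEmpty E.LeftMoves
  · have h2 : IsEmpty E.RightMoves := hd.empty_iff.mp h1
    rw [adjoint_of_empty h1 h2]
    exact dicot_star
  · have h2 : ¬ IsEmpty E.RightMoves := fun h => h1 (hd.empty_iff.mpr h)
    rw [adjoint_of_nonempty h1 h2]
    apply dicot_mk
    · exact ⟨fun h => absurd h h2, fun h => absurd h h1⟩
    · exact fun j => ihr j (hd.moveRight j)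
    · exact fun i => ihl i (hd.moveLeft i)

theorem short_adjoint : ∀ E : PGame, IsShort E → Dicot E → IsShort (adjoint E) := by
  intro E
  induction E using PGame.moveRecOn with
  | IH E ihl ihr =>
  intro hs hd
  by_cases h1 : IsEmpty E.LeftMoves
  · rw [adjoint_of_empty h1 (hd.empty_iff.mp h1)]; exact short_star
  · have h2' := hs E (follower_refl E)
    have h2 : ¬ IsEmpty E.RightMoves := fun h => h1 (hd.empty_iff.mpr h)
    rw [adjoint_of_nonempty h1 h2]
    apply short_mk
    · exact h2'.2
    · exact h2'.1
    · exact fun j => ihr j (hs.moveRight j) (hd.moveRight j)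
    · exact fun i => ihl i (hs.moveLeft i) (hd.moveLeft i)

theorem adjoint_P : ∀ E : PGame, Dicot E →
    ¬ LeftWinsFirst (E + adjoint E) ∧ ¬ RightWinsFirst (E + adjoint E) := by
  intro E
  induction E using PGame.moveRecOn with
  | IH E ihl ihr =>
  intro hd
  by_cases h1 : IsEmpty E.LeftMoves
  · have h2 : IsEmpty E.RightMoves := hd.empty_iff.mp h1
    rw [adjoint_of_empty h1 h2]
    constructor
    · rw [not_lwf_iff]
      refine ⟨⟨toLeftMovesAdd (Sum.inr PUnit.unit)⟩, fun k => ?_⟩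
      obtain ⟨s, rfl⟩ : ∃ s, toLeftMovesAdd s = k := ⟨_, toLeftMovesAdd.apply_symm_apply k⟩
      cases s with
      | inl i => exact h1.elim i
      | inr u =>
        rw [PGame.add_moveLeft_inr]
        show RightWinsFirst (E + 0)
        rw [rwf_iff]
        refine Or.inl ?_
        refine ⟨fun k => ?_⟩
        obtain ⟨s, rfl⟩ : ∃ s, toRightMovesAdd s = k := ⟨_, toRightMovesAdd.apply_symm_apply k⟩
        cases s with
        | inl j => exact h2.elim j
        | inr j => exact j.elim
    · rw [not_rwf_iff]
      refine ⟨⟨toRightMovesAdd (Sum.inr PUnit.unit)⟩, fun k => ?_⟩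
      obtain ⟨s, rfl⟩ : ∃ s, toRightMovesAdd s = k := ⟨_, toRightMovesAdd.apply_symm_apply k⟩
      cases s with
      | inl j => exact h2.elim j
      | inr u =>
        rw [PGame.add_moveRight_inr]
        show LeftWinsFirst (E + 0)
        rw [lwf_iff]
        refine Or.inl ⟨fun k => ?_⟩
        obtain ⟨s, rfl⟩ : ∃ s, toLeftMovesAdd s = k := ⟨_, toLeftMovesAdd.apply_symm_apply k⟩
        cases s with
        | inl i => exact h1.elim i
        | inr i => exact i.elim
  · have h2 : ¬ IsEmpty E.RightMoves := fun h => h1 (hd.empty_iff.mpr h)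
    rw [adjoint_of_nonempty h1 h2]
    constructor
    · rw [not_lwf_iff]
      constructor
      · obtain ⟨i⟩ := not_isEmpty_iff.mp h1
        exact ⟨toLeftMovesAdd (Sum.inl i)⟩
      · intro k
        obtain ⟨s, rfl⟩ : ∃ s, toLeftMovesAdd s = k := ⟨_, toLeftMovesAdd.apply_symm_apply k⟩
        cases s with
        | inl i =>
          rw [PGame.add_moveLeft_inl]
          rw [rwf_iff]
          refine Or.inr ⟨toRightMovesAdd (Sum.inr i), ?_⟩
          erw [PGame.add_moveRight_inr]
          exact ((ihl i (hd.moveLeft i)).1)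
        | inr j =>
          rw [PGame.add_moveLeft_inr]
          rw [rwf_iff]
          refine Or.inr ⟨toRightMovesAdd (Sum.inl j), ?_⟩
          erw [PGame.add_moveRight_inl]
          exact ((ihr j (hd.moveRight j)).1)
    · rw [not_rwf_iff]
      constructor
      · obtain ⟨j⟩ := not_isEmpty_iff.mp h2
        exact ⟨toRightMovesAdd (Sum.inl j)⟩
      · intro k
        obtain ⟨s, rfl⟩ : ∃ s, toRightMovesAdd s = k := ⟨_, toRightMovesAdd.apply_symm_apply k⟩
        cases s with
        | inl j =>
          rw [PGame.add_moveRight_inl]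
          rw [lwf_iff]
          refine Or.inr ⟨toLeftMovesAdd (Sum.inr j), ?_⟩
          erw [PGame.add_moveLeft_inr]
          exact ((ihr j (hd.moveRight j)).2)
        | inr i =>
          rw [PGame.add_moveRight_inr]
          rw [lwf_iff]
          refine Or.inr ⟨toLeftMovesAdd (Sum.inl i), ?_⟩
          erw [PGame.add_moveLeft_inl]
          exact ((ihl i (hd.moveLeft i)).2)

def Trapped (C : PGame.{u}) : Prop := ∀ i, ¬ XGood.{u} (C.moveLeft i)

attribute [local instance] Classical.propDecidable

mutual
noncomputable def tgame (C : PGame.{u}) : PGame.{u} :=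
  if IsEmpty C.LeftMoves then star
  else PGame.mk C.RightMoves C.LeftMoves (fun j => adjoint (C.moveRight j))
    (fun i => respGame (C.moveLeft i))
termination_by C.birthday
decreasing_by exact PGame.birthday_moveLeft_lt i

noncomputable def respGame (D : PGame.{u}) : PGame.{u} :=
  if LeftWinsFirst.{u} D then
    (if h : ∃ j, Trapped.{u} (D.moveRight j) then
      PGame.mk (PUnit.{u+1} ⊕ D.RightMoves) D.LeftMoves
        (Sum.elim (fun _ => tgame (D.moveRight h.choose))
          (fun e => adjoint (D.moveRight e)))
        (fun f => adjoint (D.moveLeft f))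
    else 0)
  else 0
termination_by D.birthday
decreasing_by exact PGame.birthday_moveRight_lt h.choose
end

theorem subs_induction {motive : PGame → Prop} (C : PGame)
    (ind : ∀ x, (∀ y, PGame.Subsequent y x → motive y) → motive x) : motive C :=
  PGame.wf_subsequent.induction C ind

theorem tgame_of_empty {C : PGame} (h : IsEmpty C.LeftMoves) : tgame C = star := by
  rw [tgame, if_pos h]

theorem tgame_of_nonempty {C : PGame} (h : ¬ IsEmpty C.LeftMoves) :
    tgame C = PGame.mk C.RightMoves C.LeftMoves (fun j => adjoint (C.moveRight j))
      (fun i => respGame (C.moveLeft i)) := by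
  rw [tgame, if_neg h]

theorem respGame_of_not_lwf {D : PGame.{u}} (h : ¬ LeftWinsFirst.{u} D) : respGame D = 0 := by
  rw [respGame, if_neg h]

theorem respGame_of_pos {D : PGame.{u}} (h1 : LeftWinsFirst.{u} D)
    (h : ∃ j, Trapped.{u} (D.moveRight j)) :
    respGame D = PGame.mk (PUnit.{u+1} ⊕ D.RightMoves) D.LeftMoves
      (Sum.elim (fun _ => tgame (D.moveRight h.choose))
        (fun e => adjoint (D.moveRight e)))
      (fun f => adjoint (D.moveLeft f)) := by
  rw [respGame, if_pos h1, dif_pos h]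

theorem tgame_respGame_short_dicot : ∀ C : PGame, IsShort C → Dicot C →
    (IsShort (tgame C) ∧ Dicot (tgame C)) ∧ (IsShort (respGame C) ∧ Dicot (respGame C)) := by
  intro C
  induction C using subs_induction with
  | ind C IH =>
  intro hs hd
  constructor
  · by_cases h1 : IsEmpty C.LeftMoves
    · rw [tgame_of_empty h1]; exact ⟨short_star, dicot_star⟩
    · rw [tgame_of_nonempty h1]
      have h2 : ¬ IsEmpty C.RightMoves := fun h => h1 (hd.empty_iff.mpr h)
      constructor
      · apply short_mk
        · exact (hs C (follower_refl C)).2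
        · exact (hs C (follower_refl C)).1
        · exact fun j => short_adjoint _ (hs.moveRight j) (hd.moveRight j)
        · exact fun i =>
            ((IH _ (PGame.Subsequent.moveLeft i) (hs.moveLeft i) (hd.moveLeft i)).2).1
      · apply dicot_mk
        · exact ⟨fun h => absurd h h2, fun h => absurd h h1⟩
        · exact fun j => dicot_adjoint _ (hd.moveRight j)
        · exact fun i =>
            ((IH _ (PGame.Subsequent.moveLeft i) (hs.moveLeft i) (hd.moveLeft i)).2).2
  · by_cases hlw : LeftWinsFirst C
    · by_cases h : ∃ j, Trapped (C.moveRight j)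
      · rw [respGame_of_pos hlw h]
        have hCl : ¬ IsEmpty C.LeftMoves := fun he => (hd.empty_iff.mp he).elim h.choose
        have hK := IH _ (PGame.Subsequent.moveRight h.choose)
          (hs.moveRight h.choose) (hd.moveRight h.choose)
        constructor
        · apply short_mk
          · have := (hs C (follower_refl C)).2
            exact Finite.instSum
          · exact (hs C (follower_refl C)).1
          · rintro (u | e)
            · exact hK.1.1
            · exact short_adjoint _ (hs.moveRight e) (hd.moveRight e)
          · exact fun f => short_adjoint _ (hs.moveLeft f) (hd.moveLeft f)
        · apply dicot_mk
          · constructor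
            · intro he; exact (he.false (Sum.inl PUnit.unit)).elim
            · intro he; exact absurd he hCl
          · rintro (u | e)
            · exact hK.1.2
            · exact dicot_adjoint _ (hd.moveRight e)
          · exact fun f => dicot_adjoint _ (hd.moveLeft f)
      · rw [respGame, if_pos hlw, dif_neg h]
        exact ⟨short_zero, dicot_zero⟩
    · rw [respGame_of_not_lwf hlw]
      exact ⟨short_zero, dicot_zero⟩

theorem tgame_main : ∀ C : PGame, IsShort C → Dicot C →
    (Trapped C → ¬ LeftWinsFirst (C + tgame C) ∧ ¬ RightWinsFirst (tgame C)) ∧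
    (¬ XGood C → ¬ LeftWinsFirst (C + respGame C) ∧ LeftWinsFirst (respGame C)) := by
  intro C
  induction C using subs_induction with
  | ind C IH =>
  intro hs hd
  constructor
  · intro htr
    by_cases h1 : IsEmpty C.LeftMoves
    · have h2 : IsEmpty C.RightMoves := hd.empty_iff.mp h1
      rw [tgame_of_empty h1]
      have hP := (adjoint_P C hd).1
      rw [adjoint_of_empty h1 h2] at hP
      exact ⟨hP, rwf_star⟩
    · rw [tgame_of_nonempty h1]
      constructor
      · rw [not_lwf_iff]
        constructor
        · obtain ⟨i⟩ := not_isEmpty_iff.mp h1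
          exact ⟨toLeftMovesAdd (Sum.inl i)⟩
        · intro k
          obtain ⟨s, rfl⟩ : ∃ s, toLeftMovesAdd s = k := ⟨_, toLeftMovesAdd.apply_symm_apply k⟩
          cases s with
          | inl i =>
            rw [PGame.add_moveLeft_inl]
            rw [rwf_iff]
            refine Or.inr ⟨toRightMovesAdd (Sum.inr i), ?_⟩
            erw [PGame.add_moveRight_inr]
            show ¬ LeftWinsFirst (C.moveLeft i + respGame (C.moveLeft i))
            exact ((IH _ (PGame.Subsequent.moveLeft i) (hs.moveLeft i)
              (hd.moveLeft i)).2 (htr i)).1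
          | inr j =>
            rw [PGame.add_moveLeft_inr]
            rw [rwf_iff]
            refine Or.inr ⟨toRightMovesAdd (Sum.inl j), ?_⟩
            erw [PGame.add_moveRight_inl]
            show ¬ LeftWinsFirst (C.moveRight j + adjoint (C.moveRight j))
            exact (adjoint_P _ (hd.moveRight j)).1
      · rw [not_rwf_iff]
        constructor
        · obtain ⟨i⟩ := not_isEmpty_iff.mp h1
          exact ⟨i⟩
        · intro i
          show LeftWinsFirst (respGame (C.moveLeft i))
          exact ((IH _ (PGame.Subsequent.moveLeft i) (hs.moveLeft i)
            (hd.moveLeft i)).2 (htr i)).2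
  · intro hbad
    by_cases hlw : LeftWinsFirst C
    · have h : ∃ j, Trapped (C.moveRight j) := by
        rw [xgood_iff] at hbad
        push_neg at hbad
        have h2 := hbad hlw
        exact h2
      rw [respGame_of_pos hlw h]
      have hK := (IH _ (PGame.Subsequent.moveRight h.choose)
        (hs.moveRight h.choose) (hd.moveRight h.choose)).1 h.choose_spec
      have hCl : ¬ IsEmpty C.LeftMoves := fun he => (hd.empty_iff.mp he).false h.choose
      constructor
      · rw [not_lwf_iff]
        constructor
        · obtain ⟨i⟩ := not_isEmpty_iff.mp hCl
          exact ⟨toLeftMovesAdd (Sum.inl i)⟩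
        · intro k
          obtain ⟨s, rfl⟩ : ∃ s, toLeftMovesAdd s = k := ⟨_, toLeftMovesAdd.apply_symm_apply k⟩
          cases s with
          | inl f =>
            rw [PGame.add_moveLeft_inl]
            rw [rwf_iff]
            refine Or.inr ⟨toRightMovesAdd (Sum.inr f), ?_⟩
            erw [PGame.add_moveRight_inr]
            show ¬ LeftWinsFirst (C.moveLeft f + adjoint (C.moveLeft f))
            exact (adjoint_P _ (hd.moveLeft f)).1
          | inr s2 =>
            rw [PGame.add_moveLeft_inr]
            cases s2 with
            | inl u =>
              rw [rwf_iff]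
              refine Or.inr ⟨toRightMovesAdd (Sum.inl h.choose), ?_⟩
              rw [PGame.add_moveRight_inl]
              show ¬ LeftWinsFirst (C.moveRight h.choose + tgame (C.moveRight h.choose))
              exact hK.1
            | inr e =>
              rw [rwf_iff]
              refine Or.inr ⟨toRightMovesAdd (Sum.inl e), ?_⟩
              rw [PGame.add_moveRight_inl]
              show ¬ LeftWinsFirst (C.moveRight e + adjoint (C.moveRight e))
              exact (adjoint_P _ (hd.moveRight e)).1
      · rw [lwf_iff]
        exact Or.inr ⟨Sum.inl PUnit.unit, hK.2⟩
    · rw [respGame_of_not_lwf hlw]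
      exact ⟨fun hc => hlw ((winsFirst_add_empty 0 inferInstance inferInstance C).1.mp hc),
        lwf_zero⟩

theorem dge_zero_iff_xgood : ∀ G : PGame, IsShort G → Dicot G → (Dge G 0 ↔ XGood G) := by
  intro G
  induction G using subs_induction with
  | ind G IH =>
  intro hs hd
  constructor
  · intro hdge
    rw [xgood_iff]
    constructor
    · have h0 := hdge 0 short_zero dicot_zero
      rw [outcome_add_zero, outcome_add_zero] at h0
      exact ((outcome_le_iff _ _).mp h0).1 lwf_zero
    · intro j
      by_contra hno
      push_neg at hno
      have htr : Trapped (G.moveRight j) := hno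
      have hm := (tgame_main (G.moveRight j) (hs.moveRight j) (hd.moveRight j)).1 htr
      have hTsd := (tgame_respGame_short_dicot (G.moveRight j)
        (hs.moveRight j) (hd.moveRight j)).1
      have hle := ((dge_zero_iff G).mp hdge (tgame (G.moveRight j)) hTsd.1 hTsd.2).2
      apply hm.2
      apply hle
      rw [rwf_iff]
      refine Or.inr ⟨toRightMovesAdd (Sum.inl j), ?_⟩
      rw [PGame.add_moveRight_inl]
      exact hm.1
  · intro hx
    rw [dge_zero_iff]
    intro X hXs hXd
    rw [xgood_iff] at hx
    have hgr : ∀ j, ∃ i, Dge ((G.moveRight j).moveLeft i) 0 := by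
      intro j
      obtain ⟨i, hi⟩ := hx.2 j
      refine ⟨i, ?_⟩
      have hsub : PGame.Subsequent ((G.moveRight j).moveLeft i) G :=
        (PGame.Subsequent.moveLeft i).trans (PGame.Subsequent.moveRight j)
      exact (IH _ hsub ((hs.moveRight j).moveLeft i) ((hd.moveRight j).moveLeft i)).mpr hi
    exact suff_core G hx.1 hgr X hXs hXd

/-- `G ≽ 0` (mod `D⁻`) iff `o(G) ≥ N` and every right option of `G`
has a left option `≽ 0`. -/
theorem stmt6 (G : PGame) (hs : IsShort G) (hd : Dicot G) :
    Dge G 0 ↔ (MOutcome.N ≤ outcome G) ∧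
      ∀ j : G.RightMoves, ∃ i : (G.moveRight j).LeftMoves,
        Dge ((G.moveRight j).moveLeft i) 0 := by
  rw [show Dge G 0 ↔ XGood G from dge_zero_iff_xgood G hs hd, xgood_iff, N_le_outcome_iff]
  refine and_congr Iff.rfl (forall_congr' fun j => exists_congr fun i => ?_)
  exact (dge_zero_iff_xgood _ ((hs.moveRight j).moveLeft i) ((hd.moveRight j).moveLeft i)).symm


end MisereDicot
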